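/- Let θ ∈ (0, π) and φ = arctan(1/sin θ). Then at ψ₁ = π/2 − φ and ψ₂ = π/2 + φ the CHSH success probability attains its maximum: P(θ, π/2 − φ, π/2 + φ) = 1/2 + √(1 + sin²θ)/4 = sup over all real ψ₁, ψ₂ of P(θ, ψ₁, ψ₂). -/
import Mathlib


/-- The CHSH success probability of the target state for angle `θ` and
measurement angles `ψ₁, ψ₂`. -/
noncomputable def chshP (θ ψ₁ ψ₂ : ℝ) : ℝ :=
  1 / 2 + (1 / 8) * (Real.sin θ * (Real.sin ψ₁ + Real.sin ψ₂)
    + Real.cos ψ₁ - Real.cos ψ₂)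

lemma aux_lin_bound (a b x : ℝ) :
    a * Real.sin x + b * Real.cos x ≤ Real.sqrt (a ^ 2 + b ^ 2) := by
  have h := Real.sin_sq_add_cos_sq x
  have h1 : (a * Real.sin x + b * Real.cos x) ^ 2 ≤ a ^ 2 + b ^ 2 := by
    nlinarith [sq_nonneg (a * Real.cos x - b * Real.sin x)]
  calc a * Real.sin x + b * Real.cos x
      ≤ Real.sqrt ((a * Real.sin x + b * Real.cos x) ^ 2) := by
        rw [Real.sqrt_sq_eq_abs]; exact le_abs_self _
    _ ≤ Real.sqrt (a ^ 2 + b ^ 2) := Real.sqrt_le_sqrt h1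

theorem stmt_2 (θ : ℝ) (hθ : θ ∈ Set.Ioo 0 Real.pi)
    (φ : ℝ) (hφ : φ = Real.arctan (1 / Real.sin θ)) :
    chshP θ (Real.pi / 2 - φ) (Real.pi / 2 + φ)
        = 1 / 2 + Real.sqrt (1 + Real.sin θ ^ 2) / 4 ∧
    IsGreatest {x : ℝ | ∃ ψ₁ ψ₂ : ℝ, x = chshP θ ψ₁ ψ₂}
        (1 / 2 + Real.sqrt (1 + Real.sin θ ^ 2) / 4) ∧
    1 / 2 + Real.sqrt (1 + Real.sin θ ^ 2) / 4
        = ⨆ ψ₁ : ℝ, ⨆ ψ₂ : ℝ, chshP θ ψ₁ ψ₂ := by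
  set s := Real.sin θ with hsdef
  have hs : 0 < s := Real.sin_pos_of_pos_of_lt_pi hθ.1 hθ.2
  set r := Real.sqrt (1 + s ^ 2) with hrdef
  have hr : 0 < r := Real.sqrt_pos.mpr (by positivity)
  have hr2 : r ^ 2 = 1 + s ^ 2 := Real.sq_sqrt (by positivity)
  have h1 : Real.sqrt (1 + (1 / s) ^ 2) = r / s := by
    rw [show 1 + (1 / s) ^ 2 = (1 + s ^ 2) / s ^ 2 by field_simp; ring,
      Real.sqrt_div (by positivity), Real.sqrt_sq hs.le]
  have hval : chshP θ (Real.pi / 2 - φ) (Real.pi / 2 + φ) = 1 / 2 + r / 4 := by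
    unfold chshP
    rw [hφ]
    simp only [Real.sin_sub, Real.cos_sub, Real.sin_add, Real.cos_add,
      Real.sin_pi_div_two, Real.cos_pi_div_two, Real.cos_arctan,
      Real.sin_arctan, h1, ← hsdef]
    field_simp
    nlinarith [hr2]
  have hub : ∀ ψ₁ ψ₂ : ℝ, chshP θ ψ₁ ψ₂ ≤ 1 / 2 + r / 4 := by
    intro ψ₁ ψ₂
    have h1 := aux_lin_bound s 1 ψ₁
    have h2 := aux_lin_bound s (-1) ψ₂
    have he : Real.sqrt (s ^ 2 + 1 ^ 2) = r := by
      rw [hrdef]; ring_nf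
    rw [he] at h1
    rw [show s ^ 2 + (-1 : ℝ) ^ 2 = s ^ 2 + 1 ^ 2 by ring, he] at h2
    unfold chshP
    nlinarith [h1, h2]
  have hmem : (1 / 2 + r / 4) ∈ {x : ℝ | ∃ ψ₁ ψ₂ : ℝ, x = chshP θ ψ₁ ψ₂} :=
    ⟨Real.pi / 2 - φ, Real.pi / 2 + φ, hval.symm⟩
  have hgreat : IsGreatest {x : ℝ | ∃ ψ₁ ψ₂ : ℝ, x = chshP θ ψ₁ ψ₂} (1 / 2 + r / 4) := by
    refine ⟨hmem, ?_⟩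
    rintro x ⟨ψ₁, ψ₂, rfl⟩
    exact hub ψ₁ ψ₂
  refine ⟨hval, hgreat, ?_⟩
  have hbdd : ∀ ψ₁ : ℝ, (⨆ ψ₂ : ℝ, chshP θ ψ₁ ψ₂) ≤ 1 / 2 + r / 4 :=
    fun ψ₁ => ciSup_le (hub ψ₁)
  apply le_antisymm
  · calc (1 : ℝ) / 2 + r / 4 = chshP θ (Real.pi / 2 - φ) (Real.pi / 2 + φ) := hval.symm
      _ ≤ ⨆ ψ₂ : ℝ, chshP θ (Real.pi / 2 - φ) ψ₂ :=
          le_ciSup ⟨1 / 2 + r / 4, by rintro x ⟨ψ₂, rfl⟩; exact hub _ ψ₂⟩ _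
      _ ≤ ⨆ ψ₁ : ℝ, ⨆ ψ₂ : ℝ, chshP θ ψ₁ ψ₂ :=
          le_ciSup (f := fun ψ₁ => ⨆ ψ₂ : ℝ, chshP θ ψ₁ ψ₂)
            ⟨1 / 2 + r / 4, by rintro x ⟨ψ₁, rfl⟩; exact hbdd ψ₁⟩ _
  · exact ciSup_le hbdd
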